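/- arXiv:2108.13471 — 4 statements merged into one kernel-verified Lean document; each statement's English description precedes it below -/
import Mathlib

section
/- Let a, c be odd natural numbers with a, c ≥ 3, let b be a positive even natural number, and let d be a positive even natural number. If max(v₂(c+1), v₂(c−1)) + v₂(d) ≥ max(v₂(a+1), v₂(a−1)) + 1, then v₂(a^b − c^d) ≥ max(v₂(a+1), v₂(a−1)) + 1 (the difference a^b − c^d being taken in ℤ and assumed nonzero). -/
lemma aux_val_pow_sub_one {x n : ℕ} (hx : Odd x) (hx3 : 3 ≤ x) (hn : Even n) (hn0 : 0 < n) :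
    max (padicValNat 2 (x + 1)) (padicValNat 2 (x - 1)) + padicValNat 2 n ≤
      padicValNat 2 (x ^ n - 1) := by
  have hxm : x % 2 = 1 := Nat.odd_iff.mp hx
  have h2x : ¬ 2 ∣ x := by omega
  have hyx : 1 < x := by omega
  have hxy : 2 ∣ x - 1 := by omega
  have key := padicValNat.pow_two_sub_pow (x := x) (y := 1) hyx (by omega) h2x
      (by omega) hn
  rw [one_pow] at key
  have h1 : 1 ≤ padicValNat 2 (x + 1) :=
    one_le_padicValNat_of_dvd (by omega) (by omega)
  have h2 : 1 ≤ padicValNat 2 (x - 1) :=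
    one_le_padicValNat_of_dvd (by omega) (by omega)
  have h3 : 1 ≤ padicValNat 2 n :=
    one_le_padicValNat_of_dvd hn0.ne' hn.two_dvd
  omega

theorem stmt_0 (a c b d : ℕ) (ha : Odd a) (hc : Odd c) (ha3 : 3 ≤ a) (hc3 : 3 ≤ c)
    (hb : Even b) (hb0 : 0 < b) (hd : Even d) (hd0 : 0 < d)
    (hne : (a : ℤ) ^ b - (c : ℤ) ^ d ≠ 0)
    (h : max (padicValNat 2 (c + 1)) (padicValNat 2 (c - 1)) + padicValNat 2 d ≥
      max (padicValNat 2 (a + 1)) (padicValNat 2 (a - 1)) + 1) :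
    padicValInt 2 ((a : ℤ) ^ b - (c : ℤ) ^ d) ≥
      max (padicValNat 2 (a + 1)) (padicValNat 2 (a - 1)) + 1 := by
  set M := max (padicValNat 2 (a + 1)) (padicValNat 2 (a - 1)) + 1 with hM
  -- divisibility of a^b - 1
  have hvb : 1 ≤ padicValNat 2 b := one_le_padicValNat_of_dvd hb0.ne' hb.two_dvd
  have hva : M ≤ padicValNat 2 (a ^ b - 1) := by
    have := aux_val_pow_sub_one ha ha3 hb hb0
    omega
  have hvc : M ≤ padicValNat 2 (c ^ d - 1) := by
    have := aux_val_pow_sub_one hc hc3 hd hd0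
    omega
  have hda : (2 : ℕ) ^ M ∣ a ^ b - 1 :=
    ((padicValNat_dvd_iff M (a ^ b - 1)).mpr (Or.inr hva))
  have hdc : (2 : ℕ) ^ M ∣ c ^ d - 1 :=
    ((padicValNat_dvd_iff M (c ^ d - 1)).mpr (Or.inr hvc))
  have hpa : 1 ≤ a ^ b := Nat.one_le_pow _ _ (by omega)
  have hpc : 1 ≤ c ^ d := Nat.one_le_pow _ _ (by omega)
  have hdaz : (2 : ℤ) ^ M ∣ (a : ℤ) ^ b - 1 := by
    have := Int.natCast_dvd_natCast.mpr hda
    push_cast [Nat.cast_sub hpa] at this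
    exact_mod_cast this
  have hdcz : (2 : ℤ) ^ M ∣ (c : ℤ) ^ d - 1 := by
    have := Int.natCast_dvd_natCast.mpr hdc
    push_cast [Nat.cast_sub hpc] at this
    exact_mod_cast this
  have hdvd : (2 : ℤ) ^ M ∣ (a : ℤ) ^ b - (c : ℤ) ^ d := by
    have := dvd_sub hdaz hdcz
    simpa using this
  have := (padicValInt_dvd_iff (p := 2) M ((a : ℤ) ^ b - (c : ℤ) ^ d)).mp (by exact_mod_cast hdvd)
  rcases this with h0 | hle
  · exact absurd h0 hne
  · exact hle
end

section
/- Let a, c be odd natural numbers with a, c ≥ 3, let b be a positive odd natural number, and let d be a positive even natural number. If max(v₂(c+1), v₂(c−1)) + v₂(d) ≥ max(v₂(a+1), v₂(a−1)) + 1, then v₂(a^b − c^d) = min(v₂(a−1), max(v₂(c+1), v₂(c−1)) + v₂(d)) = v₂(a−1) (the difference a^b − c^d being taken in ℤ). -/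
lemma sum_odd_pow_odd (a : ℕ) (ha : Odd a) (b : ℕ) (hb : Odd b) :
    ¬ (2:ℤ) ∣ ∑ i ∈ Finset.range b, (a:ℤ) ^ i := by
  rw [Int.two_dvd_ne_zero]
  rw [Finset.sum_int_mod]
  have : ∀ i ∈ Finset.range b, (a:ℤ) ^ i % 2 = 1 := by
    intro i _
    have : Odd ((a:ℤ)^i) := (Int.odd_coe_nat a |>.mpr ha).pow
    exact Int.odd_iff.mp this
  rw [Finset.sum_congr rfl this]
  simp
  exact Int.odd_iff.mp (by exact_mod_cast hb)

lemma val_pow_sub_one_odd (a b : ℕ) (ha : Odd a) (ha3 : 3 ≤ a) (hb : Odd b) :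
    padicValInt 2 ((a:ℤ) ^ b - 1) = padicValNat 2 (a - 1) := by
  have hgeom : (a:ℤ) ^ b - 1 = ((a:ℤ) - 1) * ∑ i ∈ Finset.range b, (a:ℤ) ^ i := by
    rw [mul_comm]
    exact (geom_sum_mul (a:ℤ) b).symm
  have hS : ¬ (2:ℤ) ∣ ∑ i ∈ Finset.range b, (a:ℤ) ^ i := sum_odd_pow_odd a ha b hb
  have hS0 : (∑ i ∈ Finset.range b, (a:ℤ) ^ i) ≠ 0 := fun h => hS (h ▸ dvd_zero 2)
  have ha1 : (a:ℤ) - 1 ≠ 0 := by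
    have : (3:ℤ) ≤ a := by exact_mod_cast ha3
    omega
  rw [hgeom, padicValInt.mul ha1 hS0, padicValInt.eq_zero_of_not_dvd hS, add_zero]
  have : (a:ℤ) - 1 = ((a - 1 : ℕ) : ℤ) := by
    have : (1:ℕ) ≤ a := by omega
    push_cast [this]; ring
  rw [this, padicValInt.of_nat]

theorem stmt_1 (a c b d : ℕ) (ha : Odd a) (hc : Odd c) (ha3 : 3 ≤ a) (hc3 : 3 ≤ c)
    (hb : Odd b) (hb0 : 0 < b) (hd : Even d) (hd0 : 0 < d)
    (h : max (padicValNat 2 (c + 1)) (padicValNat 2 (c - 1)) + padicValNat 2 d ≥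
      max (padicValNat 2 (a + 1)) (padicValNat 2 (a - 1)) + 1) :
    padicValInt 2 ((a : ℤ) ^ b - (c : ℤ) ^ d) =
      min (padicValNat 2 (a - 1))
        (max (padicValNat 2 (c + 1)) (padicValNat 2 (c - 1)) + padicValNat 2 d) ∧
    min (padicValNat 2 (a - 1))
        (max (padicValNat 2 (c + 1)) (padicValNat 2 (c - 1)) + padicValNat 2 d) =
      padicValNat 2 (a - 1) := by
  set A := padicValNat 2 (a - 1) with hA
  set M := max (padicValNat 2 (c + 1)) (padicValNat 2 (c - 1)) + padicValNat 2 d with hM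
  have hAM : A < M := by
    have : A ≤ max (padicValNat 2 (a + 1)) (padicValNat 2 (a - 1)) := le_max_right _ _
    omega
  -- min of valuations of c+1, c-1 is 1
  obtain ⟨k, hk⟩ := hc
  have hk1 : 1 ≤ k := by omega
  have hcm1 : c - 1 = 2 * k := by omega
  have hcp1 : c + 1 = 2 * (k + 1) := by omega
  have hmin : min (padicValNat 2 (c + 1)) (padicValNat 2 (c - 1)) = 1 := by
    rw [hcm1, hcp1]
    rw [padicValNat.mul (by norm_num) (by omega), padicValNat.mul (by norm_num) (by omega)]
    rw [padicValNat.self (by norm_num)]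
    rcases Nat.even_or_odd k with hke | hko
    · rw [Nat.even_iff] at hke
      have : padicValNat 2 (k + 1) = 0 :=
        padicValNat.eq_zero_of_not_dvd (by omega)
      simp [this]
    · rw [Nat.odd_iff] at hko
      have : padicValNat 2 k = 0 :=
        padicValNat.eq_zero_of_not_dvd (by omega)
      simp [this]
  -- valuation of c^d - 1
  have hcd : padicValNat 2 (c ^ d - 1) = M := by
    have := padicValNat.pow_two_sub_pow (x := c) (y := 1) (by omega) (by omega)
      (by omega) (by omega) hd
    simp only [one_pow, mul_one] at this
    have hsum : padicValNat 2 (c + 1) + padicValNat 2 (c - 1)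
        = max (padicValNat 2 (c + 1)) (padicValNat 2 (c - 1)) + 1 := by
      have := min_add_max (padicValNat 2 (c + 1)) (padicValNat 2 (c - 1))
      omega
    omega
  -- transfer to padicValRat
  have hcd' : padicValRat 2 ((c:ℚ) ^ d - 1) = (M : ℤ) := by
    have h1 : ((c:ℚ) ^ d - 1) = ((c ^ d - 1 : ℕ) : ℤ) := by
      have : 1 ≤ c ^ d := Nat.one_le_pow _ _ (by omega)
      push_cast [this]; ring
    rw [h1, padicValRat.of_int, padicValInt.of_nat, hcd]
  have hab' : padicValRat 2 ((a:ℚ) ^ b - 1) = (A : ℤ) := by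
    have h1 : ((a:ℚ) ^ b - 1) = (((a:ℤ) ^ b - 1 : ℤ) : ℚ) := by push_cast; ring
    rw [h1, padicValRat.of_int, val_pow_sub_one_odd a b ha ha3 hb]
  have hq0 : ((a:ℚ) ^ b - 1) ≠ 0 := by
    have : (3:ℚ) ≤ (a:ℚ) := by exact_mod_cast ha3
    have h1 : (1:ℚ) < (a:ℚ) ^ b := one_lt_pow₀ (by linarith) (by omega)
    linarith
  have hr0 : (1 - (c:ℚ) ^ d) ≠ 0 := by
    have : (3:ℚ) ≤ (c:ℚ) := by exact_mod_cast hc3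
    have h1 : (1:ℚ) < (c:ℚ) ^ d := one_lt_pow₀ (by linarith) (by omega)
    linarith
  have hrval : padicValRat 2 (1 - (c:ℚ) ^ d) = (M : ℤ) := by
    have : (1 - (c:ℚ) ^ d) = -(((c:ℚ) ^ d - 1)) := by ring
    rw [this, padicValRat.neg, hcd']
  have hqr0 : ((a:ℚ) ^ b - 1) + (1 - (c:ℚ) ^ d) ≠ 0 := by
    intro h0
    have hq : ((a:ℚ) ^ b - 1) = -(1 - (c:ℚ) ^ d) := by linarith
    have := hab'
    rw [hq, padicValRat.neg, hrval] at this
    have : M = A := by exact_mod_cast this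
    omega
  have hlt : padicValRat 2 ((a:ℚ) ^ b - 1) < padicValRat 2 (1 - (c:ℚ) ^ d) := by
    rw [hab', hrval]; exact_mod_cast hAM
  have hfinal := padicValRat.add_eq_of_lt (p := 2) hqr0 hq0 hr0 hlt
  rw [hab'] at hfinal
  have hcast : ((a:ℚ) ^ b - 1) + (1 - (c:ℚ) ^ d) = (((a:ℤ) ^ b - (c:ℤ) ^ d : ℤ) : ℚ) := by
    push_cast; ring
  rw [hcast, padicValRat.of_int] at hfinal
  have hval : padicValInt 2 ((a:ℤ) ^ b - (c:ℤ) ^ d) = A := by exact_mod_cast hfinal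
  refine ⟨?_, ?_⟩
  · rw [hval, min_eq_left hAM.le]
  · exact min_eq_left hAM.le
end

section
/- Let a, c be odd natural numbers with a, c ≥ 3, let b be a positive even natural number, and let d be a positive even natural number. If max(v₂(c+1), v₂(c−1)) + v₂(d) < max(v₂(a+1), v₂(a−1)) + 1, then v₂(a^b − c^d) = max(v₂(c+1), v₂(c−1)) + v₂(d) (the difference a^b − c^d being taken in ℤ). -/
/-- For odd `a ≥ 3`, `v₂(a+1) + v₂(a-1) = max(v₂(a+1), v₂(a-1)) + 1`. -/
lemma aux_sum_eq_max_add_one (a : ℕ) (ha : Odd a) (ha3 : 3 ≤ a) :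
    padicValNat 2 (a + 1) + padicValNat 2 (a - 1) =
      max (padicValNat 2 (a + 1)) (padicValNat 2 (a - 1)) + 1 := by
  obtain ⟨k, hk⟩ := ha
  have hk1 : 1 ≤ k := by omega
  have hm : a - 1 = 2 * k := by omega
  have hp : a + 1 = 2 * (k + 1) := by omega
  rcases Nat.even_or_odd k with hke | hko
  · -- k even, so k+1 odd, v₂(a+1) = 1, v₂(a-1) ≥ 1
    have h1 : padicValNat 2 (a + 1) = 1 := by
      rw [hp, padicValNat.mul (by norm_num) (by omega), padicValNat.self (by norm_num),
        padicValNat.eq_zero_of_not_dvd (by rcases hke with ⟨t, ht⟩; omega)]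
    have h2 : 1 ≤ padicValNat 2 (a - 1) := by
      have : Fact (Nat.Prime 2) := ⟨Nat.prime_two⟩
      exact one_le_padicValNat_of_dvd (by omega) ⟨k, hm⟩
    omega
  · -- k odd, v₂(a-1) = 1, v₂(a+1) ≥ 1
    have h1 : padicValNat 2 (a - 1) = 1 := by
      rw [hm, padicValNat.mul (by norm_num) (by omega), padicValNat.self (by norm_num),
        padicValNat.eq_zero_of_not_dvd (by rcases hko with ⟨t, ht⟩; omega)]
    have h2 : 1 ≤ padicValNat 2 (a + 1) := by
      have : Fact (Nat.Prime 2) := ⟨Nat.prime_two⟩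
      exact one_le_padicValNat_of_dvd (by omega) ⟨k + 1, hp⟩
    omega

/-- If `v₂(n) < v₂(m)` for nonzero naturals, the 2-adic valuation of `m - n` over ℤ is `v₂(n)`. -/
lemma aux_val_sub (m n : ℕ) (hm : m ≠ 0) (hn : n ≠ 0)
    (hlt : padicValNat 2 n < padicValNat 2 m) :
    padicValInt 2 ((m : ℤ) - (n : ℤ)) = padicValNat 2 n := by
  have hem : emultiplicity (2 : ℤ) (m : ℤ) = (padicValNat 2 m : ℕ∞) := by
    rw [show ((2 : ℤ)) = ((2 : ℕ) : ℤ) by norm_num, Int.natCast_emultiplicity,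
      padicValNat_eq_emultiplicity hm]
  have hen : emultiplicity (2 : ℤ) (n : ℤ) = (padicValNat 2 n : ℕ∞) := by
    rw [show ((2 : ℤ)) = ((2 : ℕ) : ℤ) by norm_num, Int.natCast_emultiplicity,
      padicValNat_eq_emultiplicity hn]
  have key : emultiplicity (2 : ℤ) ((m : ℤ) - n) = (padicValNat 2 n : ℕ∞) := by
    rw [emultiplicity_sub_of_gt, hen]
    rw [hem, hen]
    exact_mod_cast hlt
  have hz : ((m : ℤ) - n) ≠ 0 := by
    intro h0
    have hmn : m = n := by exact_mod_cast (by linarith : (m : ℤ) = n)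
    rw [hmn] at hlt
    omega
  have hna : ((m : ℤ) - n).natAbs ≠ 0 := fun h0 => hz (Int.natAbs_eq_zero.mp h0)
  have : emultiplicity 2 ((m : ℤ) - n).natAbs = (padicValNat 2 n : ℕ∞) := by
    rw [Int.emultiplicity_natAbs]
    exact_mod_cast key
  rw [← padicValNat_eq_emultiplicity hna] at this
  unfold padicValInt
  exact_mod_cast this

theorem stmt_2 (a c b d : ℕ) (ha : Odd a) (hc : Odd c) (ha3 : 3 ≤ a) (hc3 : 3 ≤ c)
    (hb : Even b) (hb0 : 0 < b) (hd : Even d) (hd0 : 0 < d)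
    (h : max (padicValNat 2 (c + 1)) (padicValNat 2 (c - 1)) + padicValNat 2 d <
      max (padicValNat 2 (a + 1)) (padicValNat 2 (a - 1)) + 1) :
    padicValInt 2 ((a : ℤ) ^ b - (c : ℤ) ^ d) =
      max (padicValNat 2 (c + 1)) (padicValNat 2 (c - 1)) + padicValNat 2 d := by
  have hfact : Fact (Nat.Prime 2) := ⟨Nat.prime_two⟩
  obtain ⟨k, hk⟩ := id ha
  obtain ⟨l, hl⟩ := id hc
  have hab : 1 < a ^ b := Nat.one_lt_pow (by omega) (by omega)
  have hcd : 1 < c ^ d := Nat.one_lt_pow (by omega) (by omega)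
  -- LTE for a
  have hA : padicValNat 2 (a ^ b - 1 ^ b) + 1 =
      padicValNat 2 (a + 1) + padicValNat 2 (a - 1) + padicValNat 2 b :=
    padicValNat.pow_two_sub_pow (by omega) (by omega) (by omega) (by omega) hb
  have hC : padicValNat 2 (c ^ d - 1 ^ d) + 1 =
      padicValNat 2 (c + 1) + padicValNat 2 (c - 1) + padicValNat 2 d :=
    padicValNat.pow_two_sub_pow (by omega) (by omega) (by omega) (by omega) hd
  rw [one_pow] at hA hC
  have hsa := aux_sum_eq_max_add_one a ha ha3
  have hsc := aux_sum_eq_max_add_one c hc hc3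
  have hvb : 1 ≤ padicValNat 2 b :=
    one_le_padicValNat_of_dvd hb0.ne' hb.two_dvd
  have hvA : padicValNat 2 (a ^ b - 1) =
      max (padicValNat 2 (a + 1)) (padicValNat 2 (a - 1)) + padicValNat 2 b := by omega
  have hvC : padicValNat 2 (c ^ d - 1) =
      max (padicValNat 2 (c + 1)) (padicValNat 2 (c - 1)) + padicValNat 2 d := by omega
  have hlt : padicValNat 2 (c ^ d - 1) < padicValNat 2 (a ^ b - 1) := by omega
  have hrw : (a : ℤ) ^ b - (c : ℤ) ^ d =
      ((a ^ b - 1 : ℕ) : ℤ) - ((c ^ d - 1 : ℕ) : ℤ) := by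
    push_cast [Nat.cast_sub (by omega : 1 ≤ a ^ b), Nat.cast_sub (by omega : 1 ≤ c ^ d)]
    ring
  rw [hrw, aux_val_sub _ _ (by omega) (by omega) hlt, hvC]
end

section
/- Let a, c be odd natural numbers with a, c ≥ 3, let b be a positive odd natural number, and let d be a positive even natural number with a^b ≠ c^d. Then v₂(a^b − c^d) ≥ min(v₂(a−1), max(v₂(c+1), v₂(c−1)) + v₂(d)) (the difference a^b − c^d being taken in ℤ). -/
theorem stmt_11 (a c b d : ℕ) (ha : Odd a) (hc : Odd c) (ha3 : 3 ≤ a) (hc3 : 3 ≤ c)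
    (hb : Odd b) (hb0 : 0 < b) (hd : Even d) (hd0 : 0 < d)
    (hne : a ^ b ≠ c ^ d) :
    padicValInt 2 ((a : ℤ) ^ b - (c : ℤ) ^ d) ≥
      min (padicValNat 2 (a - 1))
        (max (padicValNat 2 (c + 1)) (padicValNat 2 (c - 1)) + padicValNat 2 d) := by
  have hfact : Fact (Nat.Prime 2) := ⟨Nat.prime_two⟩
  set m := min (padicValNat 2 (a - 1))
      (max (padicValNat 2 (c + 1)) (padicValNat 2 (c - 1)) + padicValNat 2 d) with hm
  -- key: v2(c+1) + v2(c-1) = max + 1 since min = 1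
  have hmin1 : min (padicValNat 2 (c + 1)) (padicValNat 2 (c - 1)) = 1 := by
    have h1 : 2 ∣ c + 1 := by
      obtain ⟨k, hk⟩ := hc; omega
    have h2 : 2 ∣ c - 1 := by
      obtain ⟨k, hk⟩ := hc; omega
    have l1 : 1 ≤ padicValNat 2 (c + 1) :=
      one_le_padicValNat_of_dvd (by omega) h1
    have l2 : 1 ≤ padicValNat 2 (c - 1) :=
      one_le_padicValNat_of_dvd (by omega) h2
    by_contra h
    have h4a : (2:ℕ) ^ 2 ∣ c + 1 := by
      apply (padicValNat_dvd_iff_le (by omega)).mpr; omega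
    have h4b : (2:ℕ) ^ 2 ∣ c - 1 := by
      apply (padicValNat_dvd_iff_le (by omega)).mpr; omega
    obtain ⟨u, hu⟩ := h4a
    obtain ⟨v, hv⟩ := h4b
    omega
  have hsum : padicValNat 2 (c + 1) + padicValNat 2 (c - 1) =
      max (padicValNat 2 (c + 1)) (padicValNat 2 (c - 1)) + 1 := by
    omega
  -- exact valuation of c^d - 1
  have hcd : padicValNat 2 (c ^ d - 1 ^ d) + 1 =
      padicValNat 2 (c + 1) + padicValNat 2 (c - 1) + padicValNat 2 d := by
    apply padicValNat.pow_two_sub_pow (by omega)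
    · obtain ⟨k, hk⟩ := hc; omega
    · obtain ⟨k, hk⟩ := hc; omega
    · omega
    · exact hd
  have hcdval : padicValNat 2 (c ^ d - 1) =
      max (padicValNat 2 (c + 1)) (padicValNat 2 (c - 1)) + padicValNat 2 d := by
    have := hcd
    rw [one_pow] at this
    omega
  -- divisibility facts over ℤ
  have hdvd1 : (2:ℤ) ^ m ∣ (a:ℤ) ^ b - 1 := by
    have h1 : (2:ℕ) ^ m ∣ a - 1 := by
      apply dvd_trans (pow_dvd_pow 2 (min_le_left _ _))
      exact pow_padicValNat_dvd
    have h2 : ((a:ℤ) - 1) ∣ (a:ℤ) ^ b - 1 := by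
      simpa using sub_dvd_pow_sub_pow (a:ℤ) 1 b
    refine dvd_trans ?_ h2
    have : ((a - 1 : ℕ) : ℤ) = (a:ℤ) - 1 := by push_cast [Nat.cast_sub (by omega : 1 ≤ a)]; ring
    rw [← this]
    exact_mod_cast h1
  have hdvd2 : (2:ℤ) ^ m ∣ (c:ℤ) ^ d - 1 := by
    have h1 : (2:ℕ) ^ m ∣ c ^ d - 1 := by
      apply dvd_trans (pow_dvd_pow 2 (min_le_right _ _))
      rw [← hcdval]
      exact pow_padicValNat_dvd
    have hc1 : 1 ≤ c ^ d := Nat.one_le_pow _ _ (by omega)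
    have : ((c ^ d - 1 : ℕ) : ℤ) = (c:ℤ) ^ d - 1 := by
      push_cast [Nat.cast_sub hc1]; ring
    rw [← this]
    exact_mod_cast h1
  have hdvd : (2:ℤ) ^ m ∣ (a:ℤ) ^ b - (c:ℤ) ^ d := by
    have : (a:ℤ) ^ b - (c:ℤ) ^ d = ((a:ℤ) ^ b - 1) - ((c:ℤ) ^ d - 1) := by ring
    rw [this]
    exact dvd_sub hdvd1 hdvd2
  have hne' : (a:ℤ) ^ b - (c:ℤ) ^ d ≠ 0 := by
    intro h
    apply hne
    have : ((a ^ b : ℕ) : ℤ) = ((c ^ d : ℕ) : ℤ) := by push_cast; linarith [sub_eq_zero.mp h]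
    exact_mod_cast this
  have := (padicValInt_dvd_iff (p := 2) m ((a:ℤ) ^ b - (c:ℤ) ^ d)).mp (by exact_mod_cast hdvd)
  rcases this with h | h
  · exact absurd h hne'
  · exact h
end
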